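/- For the polynomial sequence (P_m) of the construction with each b_k a real number satisfying b_k < −6, the sets G^k_m, H^k_m satisfy, for all m ≥ 0 and k ≥ 1: (1) G^k_m and H^k_m are compact and nonempty, and they are decreasing in k, i.e. G^{k+1}_m ⊆ G^k_m and H^{k+1}_m ⊆ H^k_m; (2) P_{m+1}(G^k_m) = G^k_{m+1} and P_{m+1}(H^k_m) = H^k_{m+1}. -/

import Mathlib

open Filter Set Metric
open scoped Topology

noncomputable section

/-- `seqQ P m n` is the composition `P n ∘ ⋯ ∘ P (m+1)` (the identity for `n ≤ m`). -/
def seqQ (P : ℕ → ℂ → ℂ) (m : ℕ) : ℕ → ℂ → ℂ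
  | 0 => id
  | n + 1 => if n + 1 ≤ m then id else P (n + 1) ∘ seqQ P m n

lemma sq_add_surj (c : ℂ) : Function.Surjective (fun z : ℂ => z ^ 2 + c) := by
  intro w
  obtain ⟨z, hz⟩ := IsAlgClosed.exists_pow_nat_eq (w - c) (n := 2) zero_lt_two
  exact ⟨z, by simp [hz]⟩

lemma isCompact_preimage_sq_add (c : ℂ) {s : Set ℂ} (hs : IsCompact s) :
    IsCompact ((fun z : ℂ => z ^ 2 + c) ⁻¹' s) := by
  obtain ⟨R, hR⟩ := hs.isBounded.subset_closedBall 0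
  have hclosed : IsClosed ((fun z : ℂ => z ^ 2 + c) ⁻¹' s) :=
    hs.isClosed.preimage (by continuity)
  refine IsCompact.of_isClosed_subset (isCompact_closedBall 0 (Real.sqrt (R + ‖c‖)))
    hclosed ?_
  intro z hz
  have h1 : ‖z ^ 2 + c‖ ≤ R := by
    have := hR hz
    simpa [Complex.dist_eq] using this
  have h2 : ‖z‖ ^ 2 ≤ R + ‖c‖ := by
    rw [← norm_pow]
    calc ‖z ^ 2‖ = ‖(z ^ 2 + c) + (-c)‖ := by ring_nf
      _ ≤ ‖z ^ 2 + c‖ + ‖-c‖ := norm_add_le _ _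
      _ ≤ R + ‖c‖ := by simp [h1]
  have : ‖z‖ ≤ Real.sqrt (R + ‖c‖) := by
    have := Real.sqrt_le_sqrt h2
    rwa [Real.sqrt_sq (norm_nonneg z)] at this
  simpa [Complex.dist_eq] using this

lemma mem_K_iff (c : ℝ) (z : ℂ) :
    z ∈ ((fun z : ℂ => z ^ 2 + (c:ℂ)) ⁻¹' closedBall 0 2) ↔ ‖z ^ 2 + c‖ ≤ 2 := by
  simp [Complex.dist_eq]

lemma re_sq_large {c : ℝ} (hc : c < -6) {z : ℂ}
    (hz : ‖z ^ 2 + c‖ ≤ 2) : 4 < z.re * z.re ∧ z.re ≠ 0 := by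
  have h1 : |(z ^ 2 + (c:ℂ)).re| ≤ 2 := le_trans (Complex.abs_re_le_norm _) hz
  have h2 : (z ^ 2 + (c:ℂ)).re = z.re * z.re - z.im * z.im + c := by
    rw [Complex.add_re, sq, Complex.mul_re, Complex.ofReal_re]
  rw [h2] at h1
  have h3 := abs_le.mp h1
  constructor
  · nlinarith [sq_nonneg z.im]
  · intro h
    rw [h] at h3
    nlinarith [sq_nonneg z.im]

set_option maxHeartbeats 1000000 in
lemma component_lemma {c ε : ℝ} (hc : c < -6) (hε : ε = 1 ∨ ε = -1)
    (C : Set ℂ)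
    (hC : C = connectedComponentIn ((fun z : ℂ => z ^ 2 + (c:ℂ)) ⁻¹' closedBall 0 2)
      ((ε : ℂ) * ((Real.sqrt (-c) : ℝ) : ℂ))) :
    IsCompact C ∧ ((ε : ℂ) * ((Real.sqrt (-c) : ℝ) : ℂ)) ∈ C ∧
      C ⊆ closedBall 0 (Real.sqrt (|c| + 2)) ∧
      ∀ w ∈ closedBall (0:ℂ) 2, ∃ z ∈ C, z ^ 2 + c = w := by
  have hεne : ε ≠ 0 := by rcases hε with h | h <;> rw [h] <;> norm_num
  have hεsq : ε * ε = 1 := by rcases hε with h | h <;> rw [h] <;> norm_num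
  have hcpos : (0:ℝ) < -c := by linarith
  set K : Set ℂ := (fun z : ℂ => z ^ 2 + (c:ℂ)) ⁻¹' closedBall 0 2 with hKdef
  set x : ℂ := (ε : ℂ) * ((Real.sqrt (-c) : ℝ) : ℂ) with hxdef
  set Kp : Set ℂ := K ∩ {z : ℂ | 0 < ε * z.re} with hKpdef
  have hKcpt : IsCompact K := isCompact_preimage_sq_add c (isCompact_closedBall 0 2)
  have hKsub : K ⊆ closedBall 0 (Real.sqrt (|c| + 2)) := by
    intro z hz
    rw [mem_K_iff] at hz
    have h2 : ‖z‖ ^ 2 ≤ |c| + 2 := by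
      rw [← norm_pow]
      calc ‖z ^ 2‖ = ‖(z ^ 2 + c) + (-(c:ℂ))‖ := by ring_nf
        _ ≤ ‖z ^ 2 + c‖ + ‖-(c:ℂ)‖ := norm_add_le _ _
        _ ≤ |c| + 2 := by
            simp only [norm_neg, Complex.norm_real, Real.norm_eq_abs]
            linarith
    have := Real.sqrt_le_sqrt h2
    rw [Real.sqrt_sq (norm_nonneg z)] at this
    simpa [Complex.dist_eq] using this
  have hreK : ∀ z ∈ K, z.re ≠ 0 := fun z hz => (re_sq_large hc ((mem_K_iff c z).mp hz)).2
  have hKpcpt : IsCompact Kp := by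
    have heq : Kp = K ∩ {z : ℂ | 0 ≤ ε * z.re} := by
      ext z
      simp only [hKpdef, mem_inter_iff, mem_setOf_eq, and_congr_right_iff]
      intro hz
      have hne : ε * z.re ≠ 0 := mul_ne_zero hεne (hreK z hz)
      exact ⟨le_of_lt, fun h => lt_of_le_of_ne h (Ne.symm hne)⟩
    rw [heq]
    exact hKcpt.inter_right (isClosed_le continuous_const (continuous_const.mul Complex.continuous_re))
  -- base point
  have hxsq : x ^ 2 + (c:ℂ) = 0 := by
    rw [hxdef]
    have : ((Real.sqrt (-c) : ℝ) : ℂ) ^ 2 = ((-c : ℝ) : ℂ) := by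
      rw [← Complex.ofReal_pow, Real.sq_sqrt (le_of_lt hcpos)]
    rw [mul_pow, this]
    have : ((ε:ℂ)) ^ 2 = 1 := by
      rcases hε with h | h <;> rw [h] <;> norm_num
    rw [this]
    push_cast
    ring
  have hxre : x.re = ε * Real.sqrt (-c) := by
    rw [hxdef, ← Complex.ofReal_mul, Complex.ofReal_re]
  have hxK : x ∈ K := by
    rw [mem_K_iff, hxsq]
    simp
  have hxKp : x ∈ Kp := by
    refine ⟨hxK, ?_⟩
    rw [mem_setOf_eq, hxre, ← mul_assoc, hεsq, one_mul]
    exact Real.sqrt_pos.mpr hcpos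
  -- surjectivity onto the disc
  have hsurj : ∀ w ∈ closedBall (0:ℂ) 2, ∃ z ∈ Kp, z ^ 2 + c = w := by
    intro w hw
    have hwre : -2 ≤ w.re := by
      have h1 : |w.re| ≤ 2 := by
        have := Complex.abs_re_le_norm w
        simp only [mem_closedBall, Complex.dist_eq, sub_zero] at hw
        linarith
      linarith [abs_le.mp h1]
    obtain ⟨z0, hz0⟩ := IsAlgClosed.exists_pow_nat_eq (w - (c:ℂ)) (n := 2) zero_lt_two
    have hz0re : z0.re ≠ 0 := by
      intro h
      have h1 : (z0 ^ 2).re = z0.re * z0.re - z0.im * z0.im := by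
        rw [sq, Complex.mul_re]
      have h2 : (w - (c:ℂ)).re = w.re - c := by
        rw [Complex.sub_re, Complex.ofReal_re]
      rw [hz0, h2, h] at h1
      nlinarith [sq_nonneg z0.im]
    have hz0ne : ε * z0.re ≠ 0 := mul_ne_zero hεne hz0re
    set z : ℂ := if 0 < ε * z0.re then z0 else -z0 with hzdef
    have hzsq : z ^ 2 = w - c := by
      rw [hzdef]
      by_cases h : 0 < ε * z0.re
      · rw [if_pos h]; exact hz0
      · rw [if_neg h, neg_pow]; simp [hz0]
    have hzre : 0 < ε * z.re := by
      rw [hzdef]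
      by_cases h : 0 < ε * z0.re
      · rw [if_pos h]; exact h
      · rw [if_neg h, Complex.neg_re, mul_neg]
        rcases lt_trichotomy (ε * z0.re) 0 with h' | h' | h'
        · linarith
        · exact absurd h' hz0ne
        · exact absurd h' h
    refine ⟨z, ⟨?_, hzre⟩, by rw [hzsq]; ring⟩
    rw [mem_K_iff, hzsq]
    have : w - (c:ℂ) + c = w := by ring
    rw [this]
    simpa [Complex.dist_eq] using hw
  -- injectivity
  have hinj : ∀ z1 ∈ Kp, ∀ z2 ∈ Kp, z1 ^ 2 = z2 ^ 2 → z1 = z2 := by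
    intro z1 h1 z2 h2 h
    have : (z1 - z2) * (z1 + z2) = 0 := by ring_nf; linear_combination h
    rcases mul_eq_zero.mp this with h' | h'
    · exact sub_eq_zero.mp h'
    · exfalso
      have hz2 : z1 = -z2 := eq_neg_of_add_eq_zero_left h'
      have ha : 0 < ε * z1.re := h1.2
      have hb : 0 < ε * z2.re := h2.2
      have hre : z1.re = -z2.re := by rw [hz2, Complex.neg_re]
      rw [hre, mul_neg] at ha
      linarith
  -- connectedness of Kp
  have hTconn : IsConnected (closedBall (0:ℂ) 2) :=
    (convex_closedBall (0:ℂ) 2).isConnected ⟨0, by simp⟩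
  have hbij : Set.BijOn (fun z : ℂ => z ^ 2 + (c:ℂ)) Kp (closedBall 0 2) := by
    refine ⟨fun z hz => hz.1, ?_, ?_⟩
    · intro z1 h1 z2 h2 h
      simp only at h
      exact hinj z1 h1 z2 h2 (by linear_combination h)
    · intro w hw
      obtain ⟨z, hz, hzw⟩ := hsurj w hw
      exact ⟨z, hz, hzw⟩
  have hKpconn : IsConnected Kp := by
    haveI : CompactSpace Kp := isCompact_iff_compactSpace.mp hKpcpt
    haveI : ConnectedSpace (closedBall (0:ℂ) 2) := Subtype.connectedSpace hTconn
    have hce : Continuous (hbij.equiv _) :=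
      Continuous.subtype_mk
        (((continuous_pow 2).add continuous_const).comp continuous_subtype_val) _
    let h := hce.homeoOfEquivCompactToT2
    have hr : IsConnected (range (Subtype.val ∘ (h.symm : closedBall (0:ℂ) 2 → Kp))) :=
      isConnected_range (continuous_subtype_val.comp h.symm.continuous)
    have heq : range (Subtype.val ∘ (h.symm : closedBall (0:ℂ) 2 → Kp)) = Kp := by
      rw [Set.range_comp, h.symm.surjective.range_eq, image_univ, Subtype.range_coe]
    rwa [heq] at hr
  -- the component equals Kp
  have hcomp : C = Kp := by
    apply Subset.antisymm
    · have hsubK : C ⊆ K := hC ▸ connectedComponentIn_subset K x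
      have hpc : IsPreconnected C := hC ▸ isPreconnected_connectedComponentIn
      have h1 : C ⊆ {z : ℂ | 0 < ε * z.re} := by
        refine hpc.subset_left_of_subset_union (v := {z : ℂ | ε * z.re < 0})
          (isOpen_lt continuous_const (continuous_const.mul Complex.continuous_re))
          (isOpen_lt (continuous_const.mul Complex.continuous_re) continuous_const)
          ?_ ?_ ⟨x, hC ▸ mem_connectedComponentIn hxK, hxKp.2⟩
        · rw [Set.disjoint_left]
          intro z h1
          simp only [mem_setOf_eq] at h1 ⊢
          exact not_lt.mpr (le_of_lt h1)
        · intro z hz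
          have hne := mul_ne_zero hεne (hreK z (hsubK hz))
          rcases lt_or_gt_of_ne hne with h | h
          · exact Or.inr h
          · exact Or.inl h
      exact subset_inter hsubK h1
    · rw [hC]
      exact hKpconn.isPreconnected.subset_connectedComponentIn hxKp inter_subset_left
  rw [hcomp]
  exact ⟨hKpcpt, hxKp, inter_subset_left.trans hKsub, fun w hw => hsurj w hw⟩

lemma seqQ_succ_of_le (P : ℕ → ℂ → ℂ) (m n : ℕ) (h : m ≤ n) :
    seqQ P m (n + 1) = P (n + 1) ∘ seqQ P m n := by
  rw [seqQ, if_neg (by omega)]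

lemma seqQ_cont (P : ℕ → ℂ → ℂ) (m : ℕ) (hP : ∀ i, m < i → Continuous (P i)) (n : ℕ) :
    Continuous (seqQ P m n) := by
  induction n with
  | zero => exact continuous_id
  | succ n ih =>
    rw [seqQ]
    split
    · exact continuous_id
    · exact (hP (n + 1) (by omega)).comp ih

lemma master (a : ℕ → ℂ) (b : ℕ → ℝ) (mk : ℕ → ℕ) (M : ℕ → ℕ)
    (hb : ∀ k, 1 ≤ k → b k < -6)
    (hmk : ∀ k, 1 ≤ k → 1 ≤ mk k)
    (hinv1 : ∀ k, 1 ≤ k → (2 : ℝ) ^ k < 2 ^ 2 ^ mk k - ‖a k‖)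
    (hinv2 : ∀ k, 1 ≤ k →
      (2 : ℝ) ^ k < ((2 : ℝ) ^ 2 ^ mk k - ‖a k‖) ^ 2 - |b k|)
    (hM : ∀ k, M k = ∑ j ∈ Finset.range k, (mk (j + 1) + 1))
    (P : ℕ → ℂ → ℂ)
    (hPa : ∀ k, 1 ≤ k → P (M k - 1) = fun z => z ^ 2 + a k)
    (hPb : ∀ k, 1 ≤ k → P (M k) = fun z => z ^ 2 + (b k : ℂ))
    (hPother : ∀ m, 1 ≤ m → (∀ k, 1 ≤ k → m ≠ M k - 1 ∧ m ≠ M k) →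
      P m = fun z => z ^ 2)
    (G : ℕ → ℕ → Set ℂ) (ε : ℝ) (hε : ε = 1 ∨ ε = -1)
    (hGtop : ∀ k, 1 ≤ k → G k (M k - 1) =
      connectedComponentIn (P (M k) ⁻¹' Metric.closedBall 0 2)
        ((ε : ℂ) * ((Real.sqrt (-b k) : ℝ) : ℂ)))
    (hGdown : ∀ k, 1 ≤ k → ∀ m, m + 2 ≤ M k →
      (∀ j, 1 ≤ j → j < k → m ≠ M j - 1) → G k m = P (m + 1) ⁻¹' G k (m + 1))
    (hGdown' : ∀ k, 1 ≤ k → ∀ m, m + 2 ≤ M k → ∀ j, 1 ≤ j → j < k → m = M j - 1 →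
      G k m = P (m + 1) ⁻¹' G k (m + 1) ∩ G j (M j - 1))
    (hGup : ∀ k, 1 ≤ k → ∀ m, M k - 1 ≤ m → G k m = seqQ P (M k - 1) m '' G k (M k - 1)) :
    ∀ m k, 1 ≤ k → (IsCompact (G k m) ∧ (G k m).Nonempty ∧ G (k + 1) m ⊆ G k m) ∧
      P (m + 1) '' G k m = G k (m + 1) := by
  -- arithmetic on M
  have hM0 : M 0 = 0 := by simp [hM]
  have hMsucc : ∀ k, M (k + 1) = M k + (mk (k + 1) + 1) := fun k => by
    rw [hM, hM, Finset.sum_range_succ]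
  have hgap : ∀ k, M k + 2 ≤ M (k + 1) := fun k => by
    have := hmk (k + 1) (by omega); rw [hMsucc]; omega
  have hmono : Monotone M := monotone_nat_of_le_succ fun k => by have := hgap k; omega
  have hM2 : ∀ k, 1 ≤ k → 2 ≤ M k := fun k hk => by
    have h1 : M 0 + 2 ≤ M 1 := hgap 0
    have h2 := hmono hk
    omega
  have hnotbet : ∀ i j, M j < M i → M i < M (j + 1) → False := by
    intro i j h1 h2
    rcases le_or_gt i j with h | h
    · have := hmono h; omega
    · have := hmono (show j + 1 ≤ i from h); omega
  -- base data
  have hbase : ∀ k, 1 ≤ k → IsCompact (G k (M k - 1)) ∧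
      ((ε : ℂ) * ((Real.sqrt (-b k) : ℝ) : ℂ)) ∈ G k (M k - 1) ∧
      G k (M k - 1) ⊆ closedBall 0 (Real.sqrt (|b k| + 2)) ∧
      ∀ w ∈ closedBall (0:ℂ) 2, ∃ z ∈ G k (M k - 1), z ^ 2 + (b k : ℂ) = w := by
    intro k hk
    exact component_lemma (hb k hk) hε (G k (M k - 1)) (by rw [hGtop k hk, hPb k hk])
  have hPform : ∀ n, 1 ≤ n → ∃ c : ℂ, P n = fun z => z ^ 2 + c := by
    intro n hn
    by_cases h1 : ∃ i, 1 ≤ i ∧ n = M i - 1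
    · obtain ⟨i, hi, hni⟩ := h1; exact ⟨a i, hni ▸ hPa i hi⟩
    · by_cases h2 : ∃ i, 1 ≤ i ∧ n = M i
      · obtain ⟨i, hi, hni⟩ := h2; exact ⟨(b i : ℂ), hni ▸ hPb i hi⟩
      · refine ⟨0, ?_⟩
        rw [hPother n hn (fun i hi => ⟨fun h => h1 ⟨i, hi, h⟩, fun h => h2 ⟨i, hi, h⟩⟩)]
        funext z; simp
  have hPcont : ∀ n, 1 ≤ n → Continuous (P n) := fun n hn => by
    obtain ⟨c, hc⟩ := hPform n hn
    rw [hc]; exact (continuous_pow 2).add continuous_const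
  have hPsq : ∀ j n, M j < n → n + 1 < M (j + 1) → P n = fun z => z ^ 2 := by
    intro j n h1 h2
    apply hPother n (by omega)
    intro i hi
    have h2' := hM2 i hi
    constructor
    · intro h
      exact hnotbet i j (by omega) (by omega)
    · intro h
      exact hnotbet i j (by omega) (by omega)
  have hsub : ∀ k j, 1 ≤ j → j ≤ k → G k (M j - 1) ⊆ G j (M j - 1) := by
    intro k j hj hjk
    rcases eq_or_lt_of_le hjk with h | h
    · subst h; exact subset_rfl
    · have h2 := hM2 j hj
      have h3 := hmono (show j + 1 ≤ k from h)
      have h4 := hgap j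
      rw [hGdown' k (by omega) (M j - 1) (by omega) j hj h rfl]
      exact inter_subset_right
  have hbound : ∀ k, 1 ≤ k → ∀ t j m, j + 1 ≤ k → M j ≤ m → m + 2 + t = M (j + 1) →
      G k m ⊆ closedBall 0 ((2:ℝ) ^ 2 ^ (m - M j)) := by
    intro k hk t
    induction t with
    | zero =>
      intro j m hjk hjm hm
      have hms := hMsucc j
      have hmk' := hmk (j + 1) (by omega)
      have hMk := hmono hjk
      have h2 := hM2 (j + 1) (by omega)
      have hstep : G k m = P (m + 1) ⁻¹' G k (m + 1) := by
        apply hGdown k hk m (by omega)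
        intro i' hi' hik h
        have h2' := hM2 i' hi'
        exact hnotbet i' j (by omega) (by omega)
      have hPa' : P (m + 1) = fun z => z ^ 2 + a (j + 1) := by
        have hrw : m + 1 = M (j + 1) - 1 := by omega
        rw [hrw]; exact hPa (j + 1) (by omega)
      have hsub2 : G k (m + 1) ⊆ closedBall 0 (Real.sqrt (|b (j + 1)| + 2)) := by
        have hrw : m + 1 = M (j + 1) - 1 := by omega
        rw [hrw]
        exact (hsub k (j + 1) (by omega) (by omega)).trans (hbase (j + 1) (by omega)).2.2.1
      intro z hz
      rw [hstep] at hz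
      simp only [mem_preimage, hPa'] at hz
      have h3 : ‖z ^ 2 + (a (j + 1) : ℂ)‖ ≤ Real.sqrt (|b (j + 1)| + 2) :=
        mem_closedBall_zero_iff.mp (hsub2 hz)
      have h4 : ‖z‖ ^ 2 ≤ Real.sqrt (|b (j + 1)| + 2) + ‖a (j + 1)‖ := by
        rw [← norm_pow]
        calc ‖z ^ 2‖ = ‖(z ^ 2 + a (j + 1)) - a (j + 1)‖ := by rw [add_sub_cancel_right]
          _ ≤ ‖z ^ 2 + a (j + 1)‖ + ‖a (j + 1)‖ := norm_sub_le _ _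
          _ ≤ _ := by linarith
      have habs : ‖a (j + 1)‖ = ‖a (j + 1)‖ := rfl
      have e0 : (2:ℝ) ≤ 2 ^ (j + 1) := by
        calc (2:ℝ) = 2 ^ 1 := (pow_one 2).symm
          _ ≤ 2 ^ (j + 1) := by
              apply pow_le_pow_right₀ (by norm_num) (by omega)
      have e1 : (0:ℝ) < 2 ^ 2 ^ mk (j + 1) - ‖a (j + 1)‖ := by
        have := hinv1 (j + 1) (by omega)
        have : (0:ℝ) < 2 ^ (j + 1) := by positivity
        linarith [hinv1 (j + 1) (by omega)]
      have e2 : |b (j + 1)| + 2 ≤ (2 ^ 2 ^ mk (j + 1) - ‖a (j + 1)‖) ^ 2 := by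
        have := hinv2 (j + 1) (by omega)
        linarith
      have e3 : Real.sqrt (|b (j + 1)| + 2) ≤ 2 ^ 2 ^ mk (j + 1) - ‖a (j + 1)‖ := by
        have := Real.sqrt_le_sqrt e2
        rwa [Real.sqrt_sq e1.le] at this
      have h5 : ‖z‖ ^ 2 ≤ (2:ℝ) ^ 2 ^ mk (j + 1) := by
        rw [habs] at h4
        linarith
      have hexp : m - M j = mk (j + 1) - 1 := by omega
      rw [mem_closedBall_zero_iff, hexp]
      have h6 : ((2:ℝ) ^ 2 ^ (mk (j + 1) - 1)) ^ 2 = (2:ℝ) ^ 2 ^ mk (j + 1) := by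
        have hmm : 2 ^ (mk (j + 1) - 1) * 2 = 2 ^ mk (j + 1) := by
          rw [← pow_succ]
          congr 1
          omega
        rw [← pow_mul, hmm]
      have h7 : (0:ℝ) < 2 ^ 2 ^ (mk (j + 1) - 1) := by positivity
      nlinarith [norm_nonneg z]
    | succ t ih =>
      intro j m hjk hjm hm
      have hms := hMsucc j
      have hMk := hmono hjk
      have hstep : G k m = P (m + 1) ⁻¹' G k (m + 1) := by
        apply hGdown k hk m (by omega)
        intro i' hi' hik h
        have h2' := hM2 i' hi'
        exact hnotbet i' j (by omega) (by omega)
      have hPsq' : P (m + 1) = fun z => z ^ 2 := hPsq j (m + 1) (by omega) (by omega)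
      have ih' := ih j (m + 1) hjk (by omega) (by omega)
      intro z hz
      rw [hstep] at hz
      simp only [mem_preimage, hPsq'] at hz
      have h3 := mem_closedBall_zero_iff.mp (ih' hz)
      rw [mem_closedBall_zero_iff]
      have hexp : m + 1 - M j = (m - M j) + 1 := by omega
      rw [hexp] at h3
      have h4 : ‖z‖ ^ 2 ≤ ((2:ℝ) ^ 2 ^ (m - M j)) ^ 2 := by
        rw [← norm_pow]
        calc ‖z ^ 2‖ ≤ (2:ℝ) ^ 2 ^ ((m - M j) + 1) := h3
          _ = ((2:ℝ) ^ 2 ^ (m - M j)) ^ 2 := by rw [← pow_mul, ← pow_succ]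
      have h7 : (0:ℝ) < 2 ^ 2 ^ (m - M j) := by positivity
      nlinarith [norm_nonneg z]
  have hball2 : ∀ k, 1 ≤ k → ∀ j, 1 ≤ j → j < k → G k (M j) ⊆ closedBall 0 2 := by
    intro k hk j hj hjk
    have hg := hgap j
    have h := hbound k hk (M (j + 1) - (M j + 2)) j (M j) hjk le_rfl (by omega)
    simpa using h
  have hlow : ∀ k, 1 ≤ k → ∀ t m, m + 1 + t = M k → IsCompact (G k m) ∧ (G k m).Nonempty := by
    intro k hk t
    induction t with
    | zero =>
      intro m hm
      have h2 := hM2 k hk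
      have hrw : m = M k - 1 := by omega
      rw [hrw]
      obtain ⟨h1, h2', _, _⟩ := hbase k hk
      exact ⟨h1, ⟨_, h2'⟩⟩
    | succ t ih =>
      intro m hm
      obtain ⟨ihc, ihn⟩ := ih (m + 1) (by omega)
      by_cases hglue : ∃ i, 1 ≤ i ∧ i < k ∧ m = M i - 1
      · obtain ⟨i, hi, hik, hmi⟩ := hglue
        have h2 := hM2 i hi
        have hmi' : m + 1 = M i := by omega
        have heq := hGdown' k hk m (by omega) i hi hik hmi
        have hPb' : P (m + 1) = fun z => z ^ 2 + (b i : ℂ) := by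
          rw [hmi']; exact hPb i hi
        obtain ⟨hbc, _, _, hbs⟩ := hbase i hi
        constructor
        · rw [heq, hPb']
          exact (isCompact_preimage_sq_add _ ihc).inter_right hbc.isClosed
        · obtain ⟨w, hw⟩ := ihn
          have hw2 : w ∈ closedBall (0:ℂ) 2 := by
            apply hball2 k hk i hi hik
            rw [← hmi']; exact hw
          obtain ⟨z, hz, hzw⟩ := hbs w hw2
          refine ⟨z, ?_⟩
          rw [heq]
          refine ⟨?_, hz⟩
          rw [mem_preimage, hPb']
          show z ^ 2 + (b i : ℂ) ∈ G k (m + 1)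
          rw [hzw]; exact hw
      · have heq := hGdown k hk m (by omega) (fun i hi hik h => hglue ⟨i, hi, hik, h⟩)
        obtain ⟨c, hc⟩ := hPform (m + 1) (by omega)
        constructor
        · rw [heq, hc]
          exact isCompact_preimage_sq_add c ihc
        · obtain ⟨w, hw⟩ := ihn
          obtain ⟨z, hz⟩ := sq_add_surj c w
          refine ⟨z, ?_⟩
          rw [heq, mem_preimage, hc]
          show z ^ 2 + c ∈ G k (m + 1)
          simp only at hz
          rw [hz]; exact hw
  have hcptne : ∀ k, 1 ≤ k → ∀ m, IsCompact (G k m) ∧ (G k m).Nonempty := by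
    intro k hk m
    have h2 := hM2 k hk
    rcases le_or_gt (M k) (m + 1) with h | h
    · obtain ⟨h1, h1'⟩ := hlow k hk 0 (M k - 1) (by omega)
      rw [hGup k hk m (by omega)]
      have hcont := seqQ_cont P (M k - 1) (fun i hi => hPcont i (by omega)) m
      exact ⟨h1.image hcont, h1'.image _⟩
    · exact hlow k hk (M k - (m + 1)) m (by omega)
  have himg : ∀ k, 1 ≤ k → ∀ m, P (m + 1) '' G k m = G k (m + 1) := by
    intro k hk m
    have h2 := hM2 k hk
    rcases le_or_gt (M k - 1) m with h | h
    · rw [hGup k hk m h, hGup k hk (m + 1) (by omega),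
        seqQ_succ_of_le P (M k - 1) m h, Set.image_comp]
    · have hmk2 : m + 2 ≤ M k := by omega
      by_cases hglue : ∃ i, 1 ≤ i ∧ i < k ∧ m = M i - 1
      · obtain ⟨i, hi, hik, hmi⟩ := hglue
        have h2' := hM2 i hi
        have hmi' : m + 1 = M i := by omega
        have heq := hGdown' k hk m hmk2 i hi hik hmi
        have hPb' : P (m + 1) = fun z => z ^ 2 + (b i : ℂ) := by
          rw [hmi']; exact hPb i hi
        obtain ⟨_, _, _, hbs⟩ := hbase i hi
        apply Subset.antisymm
        · rw [heq]
          rintro w ⟨z, hz, rfl⟩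
          exact hz.1
        · intro w hw
          have hw2 : w ∈ closedBall (0:ℂ) 2 := by
            apply hball2 k hk i hi hik
            rw [← hmi']; exact hw
          obtain ⟨z, hz, hzw⟩ := hbs w hw2
          refine ⟨z, ?_, ?_⟩
          · rw [heq]
            refine ⟨?_, hz⟩
            rw [mem_preimage, hPb']
            show z ^ 2 + (b i : ℂ) ∈ G k (m + 1)
            rw [hzw]; exact hw
          · rw [hPb']; exact hzw
      · have heq := hGdown k hk m hmk2 (fun i hi hik h => hglue ⟨i, hi, hik, h⟩)
        rw [heq]
        apply Set.image_preimage_eq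
        obtain ⟨c, hc⟩ := hPform (m + 1) (by omega)
        rw [hc]
        exact sq_add_surj c
  have hdec : ∀ k, 1 ≤ k → ∀ m, G (k + 1) m ⊆ G k m := by
    intro k hk
    have hMk2 := hM2 k hk
    have hgapk := hgap k
    have hbasecase : G (k + 1) (M k - 1) ⊆ G k (M k - 1) := by
      rw [hGdown' (k + 1) (by omega) (M k - 1) (by omega) k hk (by omega) rfl]
      exact inter_subset_right
    have hstep : ∀ m, m + 2 ≤ M k → G (k + 1) (m + 1) ⊆ G k (m + 1) →
        G (k + 1) m ⊆ G k m := by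
      intro m hm ih
      by_cases hglue : ∃ i, 1 ≤ i ∧ i < k ∧ m = M i - 1
      · obtain ⟨i, hi, hik, hmi⟩ := hglue
        rw [hGdown' k hk m hm i hi hik hmi,
          hGdown' (k + 1) (by omega) m (by omega) i hi (by omega) hmi]
        exact inter_subset_inter (preimage_mono ih) subset_rfl
      · have hne : ∀ i, 1 ≤ i → i < k → m ≠ M i - 1 := fun i hi hik hh =>
          hglue ⟨i, hi, hik, hh⟩
        have hne' : ∀ i, 1 ≤ i → i < k + 1 → m ≠ M i - 1 := by
          intro i hi hik
          by_cases hik' : i = k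
          · subst hik'; omega
          · exact hne i hi (by omega)
        rw [hGdown k hk m hm hne, hGdown (k + 1) (by omega) m (by omega) hne']
        exact preimage_mono ih
    have hdown : ∀ t m, m + 1 + t = M k → G (k + 1) m ⊆ G k m := by
      intro t
      induction t with
      | zero =>
        intro m hm
        have hrw : m = M k - 1 := by omega
        rw [hrw]; exact hbasecase
      | succ t ih =>
        intro m hm
        exact hstep m (by omega) (ih (m + 1) (by omega))
    have hup : ∀ t, G (k + 1) (M k - 1 + t) ⊆ G k (M k - 1 + t) := by
      intro t
      induction t with
      | zero => simpa using hbasecase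
      | succ t ih =>
        have e1 := himg k hk (M k - 1 + t)
        have e2 := himg (k + 1) (by omega) (M k - 1 + t)
        have hrw : M k - 1 + (t + 1) = (M k - 1 + t) + 1 := by omega
        rw [hrw, ← e1, ← e2]
        exact image_mono ih
    intro m
    rcases le_or_gt (M k) (m + 1) with h | h
    · have hrw : m = M k - 1 + (m - (M k - 1)) := by omega
      rw [hrw]; exact hup _
    · exact hdown (M k - (m + 1)) m (by omega)
  intro m k hk
  obtain ⟨hc, hn⟩ := hcptne k hk m
  exact ⟨⟨hc, hn, hdec k hk m⟩, himg k hk m⟩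

theorem GH_compact_nonempty_decreasing_invariant
    (a : ℕ → ℂ) (b : ℕ → ℝ) (mk : ℕ → ℕ) (M : ℕ → ℕ)
    (hb : ∀ k, 1 ≤ k → b k < -6)
    (hmk : ∀ k, 1 ≤ k → 1 ≤ mk k)
    (hinv1 : ∀ k, 1 ≤ k → (2 : ℝ) ^ k < 2 ^ 2 ^ mk k - ‖a k‖)
    (hinv2 : ∀ k, 1 ≤ k →
      (2 : ℝ) ^ k < ((2 : ℝ) ^ 2 ^ mk k - ‖a k‖) ^ 2 - |b k|)
    (hM : ∀ k, M k = ∑ j ∈ Finset.range k, (mk (j + 1) + 1))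
    (P : ℕ → ℂ → ℂ)
    (hPa : ∀ k, 1 ≤ k → P (M k - 1) = fun z => z ^ 2 + a k)
    (hPb : ∀ k, 1 ≤ k → P (M k) = fun z => z ^ 2 + (b k : ℂ))
    (hPother : ∀ m, 1 ≤ m → (∀ k, 1 ≤ k → m ≠ M k - 1 ∧ m ≠ M k) →
      P m = fun z => z ^ 2)
    (G H : ℕ → ℕ → Set ℂ)
    (hGtop : ∀ k, 1 ≤ k → G k (M k - 1) =
      connectedComponentIn (P (M k) ⁻¹' Metric.closedBall 0 2)
        ((Real.sqrt (-b k) : ℝ) : ℂ))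
    (hHtop : ∀ k, 1 ≤ k → H k (M k - 1) =
      connectedComponentIn (P (M k) ⁻¹' Metric.closedBall 0 2)
        (-((Real.sqrt (-b k) : ℝ) : ℂ)))
    (hGdown : ∀ k, 1 ≤ k → ∀ m, m + 2 ≤ M k →
      (∀ j, 1 ≤ j → j < k → m ≠ M j - 1) → G k m = P (m + 1) ⁻¹' G k (m + 1))
    (hGdown' : ∀ k, 1 ≤ k → ∀ m, m + 2 ≤ M k → ∀ j, 1 ≤ j → j < k → m = M j - 1 →
      G k m = P (m + 1) ⁻¹' G k (m + 1) ∩ G j (M j - 1))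
    (hHdown : ∀ k, 1 ≤ k → ∀ m, m + 2 ≤ M k →
      (∀ j, 1 ≤ j → j < k → m ≠ M j - 1) → H k m = P (m + 1) ⁻¹' H k (m + 1))
    (hHdown' : ∀ k, 1 ≤ k → ∀ m, m + 2 ≤ M k → ∀ j, 1 ≤ j → j < k → m = M j - 1 →
      H k m = P (m + 1) ⁻¹' H k (m + 1) ∩ H j (M j - 1))
    (hGup : ∀ k, 1 ≤ k → ∀ m, M k - 1 ≤ m → G k m = seqQ P (M k - 1) m '' G k (M k - 1))
    (hHup : ∀ k, 1 ≤ k → ∀ m, M k - 1 ≤ m → H k m = seqQ P (M k - 1) m '' H k (M k - 1)) :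
    ∀ m : ℕ, ∀ k, 1 ≤ k →
      (IsCompact (G k m) ∧ (G k m).Nonempty ∧
        IsCompact (H k m) ∧ (H k m).Nonempty ∧
        G (k + 1) m ⊆ G k m ∧ H (k + 1) m ⊆ H k m) ∧
      (P (m + 1) '' G k m = G k (m + 1) ∧ P (m + 1) '' H k m = H k (m + 1)) := by
  have hG := master a b mk M hb hmk hinv1 hinv2 hM P hPa hPb hPother G 1 (Or.inl rfl)
    (fun k hk => by rw [hGtop k hk]; norm_num) hGdown hGdown' hGup
  have hH := master a b mk M hb hmk hinv1 hinv2 hM P hPa hPb hPother H (-1) (Or.inr rfl)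
    (fun k hk => by rw [hHtop k hk]; push_cast; rw [neg_one_mul]) hHdown hHdown' hHup
  intro m k hk
  obtain ⟨⟨hGc, hGn, hGd⟩, hGi⟩ := hG m k hk
  obtain ⟨⟨hHc, hHn, hHd⟩, hHi⟩ := hH m k hk
  exact ⟨⟨hGc, hGn, hHc, hHn, hGd, hHd⟩, hGi, hHi⟩
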